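/- (Lemma 3) Let μ₁, μ₂, μ₃ be finitely supported idempotent probability measures on X with representations μ_i(φ) = max_{1≤j≤n_i}(λ_{ij} + φ(x_{ij})) (i = 1, 2, 3). Let (γ_{km}) be a coupling matrix for μ₁, μ₂ attaining H(μ₁, μ₂) and (η_{ml}) a coupling matrix for μ₂, μ₃ attaining H(μ₂, μ₃). Then there exists a coupling matrix (ζ_{kl}) for μ₁, μ₃ such that {(k, l) : ζ_{kl} ≠ −∞} = {(k, l) : there exists m ∈ {1, …, n₂} with γ_{km} ≠ −∞ and η_{ml} ≠ −∞}. -/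

import Mathlib

open Filter Topology

variable {X : Type*}

/-- An idempotent probability measure on a topological space `X`:
a functional on `C(X, ℝ)` preserving constants, shifting by constants,
and turning pointwise max into max. -/
def IsIPM [TopologicalSpace X] (μ : C(X, ℝ) → ℝ) : Prop :=
  (∀ c : ℝ, μ (ContinuousMap.const X c) = c) ∧
  (∀ (φ : C(X, ℝ)) (c : ℝ), μ (φ + ContinuousMap.const X c) = μ φ + c) ∧
  (∀ φ ψ : C(X, ℝ), μ (φ ⊔ ψ) = max (μ φ) (μ ψ))

/-- `μ` is represented as `μ(φ) = max_i (λ i + φ (x i))` with `x` pairwise distinct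
and `max_i λ i = 0`. -/
def IsRepr [TopologicalSpace X] (μ : C(X, ℝ) → ℝ) {n : ℕ}
    (x : Fin n → X) (lam : Fin n → ℝ) : Prop :=
  0 < n ∧ Function.Injective x ∧ (⨆ i, lam i) = 0 ∧
    ∀ φ : C(X, ℝ), μ φ = ⨆ i, (lam i + φ (x i))

/-- A finitely supported idempotent probability measure. -/
def IsFinSuppIPM [TopologicalSpace X] (μ : C(X, ℝ) → ℝ) : Prop :=
  ∃ (n : ℕ) (x : Fin n → X) (lam : Fin n → ℝ), IsRepr μ x lam

/-- `ξ` is a coupling of `μ1` and `μ2`: an idempotent probability measure on `X × X`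
whose marginals are `μ1` and `μ2`. -/
def IsCoupling [TopologicalSpace X] (μ1 μ2 : C(X, ℝ) → ℝ)
    (ξ : C(X × X, ℝ) → ℝ) : Prop :=
  IsIPM ξ ∧
  (∀ φ : C(X, ℝ), ξ (φ.comp ContinuousMap.fst) = μ1 φ) ∧
  (∀ φ : C(X, ℝ), ξ (φ.comp ContinuousMap.snd) = μ2 φ)

/-- A coupling matrix for weight vectors `lam1`, `lam2`: entries in `ℝ ∪ {−∞}`,
with row maxima `lam1` and column maxima `lam2`. -/
def IsCouplingMatrix {n1 n2 : ℕ} (lam1 : Fin n1 → ℝ) (lam2 : Fin n2 → ℝ)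
    (γ : Fin n1 → Fin n2 → WithBot ℝ) : Prop :=
  (∀ j, (Finset.univ.sup fun k => γ j k) = (lam1 j : WithBot ℝ)) ∧
  (∀ k, (Finset.univ.sup fun j => γ j k) = (lam2 k : WithBot ℝ))

/-- The cost `max{ |λ_{2k} − λ_{1j}| + ρ(x_{1j}, x_{2k}) : γ_{jk} ≠ −∞ }`. -/
noncomputable def matCost [MetricSpace X] {n1 n2 : ℕ}
    (x1 : Fin n1 → X) (lam1 : Fin n1 → ℝ) (x2 : Fin n2 → X) (lam2 : Fin n2 → ℝ)
    (γ : Fin n1 → Fin n2 → WithBot ℝ) : ℝ :=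
  sSup {c : ℝ | ∃ j k, γ j k ≠ ⊥ ∧ c = |lam2 k - lam1 j| + dist (x1 j) (x2 k)}

/-- `H(μ1, μ2)`: the infimum of costs over all coupling matrices
(for all representations of `μ1`, `μ2`; the representation is unique). -/
noncomputable def Hdist [MetricSpace X] (μ1 μ2 : C(X, ℝ) → ℝ) : ℝ :=
  sInf {c : ℝ | ∃ (n1 n2 : ℕ) (x1 : Fin n1 → X) (lam1 : Fin n1 → ℝ)
      (x2 : Fin n2 → X) (lam2 : Fin n2 → ℝ) (γ : Fin n1 → Fin n2 → WithBot ℝ),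
      IsRepr μ1 x1 lam1 ∧ IsRepr μ2 x2 lam2 ∧ IsCouplingMatrix lam1 lam2 γ ∧
      c = matCost x1 lam1 x2 lam2 γ}

/-- `ρ_ω(μ1, μ2) = min{diam X, H(μ1, μ2)}`. -/
noncomputable def rhoOmega [MetricSpace X] (μ1 μ2 : C(X, ℝ) → ℝ) : ℝ :=
  min (Metric.diam (Set.univ : Set X)) (Hdist μ1 μ2)

/-- Lemma 3: given coupling matrices attaining `H(μ₁, μ₂)` and
`H(μ₂, μ₃)`, there is a coupling matrix for `μ₁, μ₃` whose finite entries sit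
exactly at the "composed" positions. -/
theorem stmt5 [MetricSpace X] [CompactSpace X]
    (μ1 μ2 μ3 : C(X, ℝ) → ℝ) {n1 n2 n3 : ℕ}
    (x1 : Fin n1 → X) (lam1 : Fin n1 → ℝ) (x2 : Fin n2 → X) (lam2 : Fin n2 → ℝ)
    (x3 : Fin n3 → X) (lam3 : Fin n3 → ℝ)
    (h1 : IsRepr μ1 x1 lam1) (h2 : IsRepr μ2 x2 lam2) (h3 : IsRepr μ3 x3 lam3)
    (γ : Fin n1 → Fin n2 → WithBot ℝ) (η : Fin n2 → Fin n3 → WithBot ℝ)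
    (hγ : IsCouplingMatrix lam1 lam2 γ)
    (hγH : matCost x1 lam1 x2 lam2 γ = Hdist μ1 μ2)
    (hη : IsCouplingMatrix lam2 lam3 η)
    (hηH : matCost x2 lam2 x3 lam3 η = Hdist μ2 μ3) :
    ∃ ζ : Fin n1 → Fin n3 → WithBot ℝ, IsCouplingMatrix lam1 lam3 ζ ∧
      ∀ k l, ζ k l ≠ ⊥ ↔ ∃ m, γ k m ≠ ⊥ ∧ η m l ≠ ⊥ := by
  refine ⟨fun k l => Finset.univ.sup fun m => γ k m ⊓ η m l, ⟨?_, ?_⟩, ?_⟩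
  · intro k
    have : (Finset.univ.sup fun l => Finset.univ.sup fun m => γ k m ⊓ η m l)
        = Finset.univ.sup fun m => Finset.univ.sup fun l => γ k m ⊓ η m l :=
      Finset.sup_comm _ _ _
    rw [this]
    have : ∀ m, (Finset.univ.sup fun l => γ k m ⊓ η m l) = γ k m := by
      intro m
      rw [← Finset.sup_inf_distrib_left, (hη.1 m)]
      exact inf_eq_left.mpr ((hγ.2 m) ▸ Finset.le_sup (f := fun j => γ j m) (Finset.mem_univ k))
    simp_rw [this]
    exact hγ.1 k
  · intro l
    have : ∀ m, (Finset.univ.sup fun k => γ k m ⊓ η m l) = η m l := by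
      intro m
      rw [← Finset.sup_inf_distrib_right, (hγ.2 m)]
      exact inf_eq_right.mpr ((hη.1 m) ▸ Finset.le_sup (f := fun l => η m l) (Finset.mem_univ l))
    have h : (Finset.univ.sup fun k => Finset.univ.sup fun m => γ k m ⊓ η m l)
        = Finset.univ.sup fun m => Finset.univ.sup fun k => γ k m ⊓ η m l :=
      Finset.sup_comm _ _ _
    rw [h]
    simp_rw [this]
    exact hη.2 l
  · intro k l
    rw [← not_iff_not]
    push_neg
    constructor
    · intro h m
      have := (Finset.sup_eq_bot_iff _ _).mp h m (Finset.mem_univ m)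
      intro hg
      rcases min_eq_bot.mp (by exact this) with h' | h'
      · exact absurd h' hg
      · exact h'
    · intro h
      apply (Finset.sup_eq_bot_iff _ _).mpr
      intro m _
      by_cases hg : γ k m = ⊥
      · simp [hg]
      · simp [h m hg]
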